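/- Let G be a finite group. Then G contains a characteristic abelian subgroup of index at most μ(G). -/

import Mathlib

open Pointwise

/-- The Chermak–Delgado index-measure of a subgroup `H` of `G`:
`m(G,H) = |G:H| * |G:C_G(H)|`. -/
noncomputable def cdMeasure {G : Type*} [Group G] (H : Subgroup G) : ℕ :=
  H.index * (Subgroup.centralizer (H : Set G)).index

/-- `μ(G)`, the minimum of `m(G,H)` over all subgroups `H ≤ G`. -/
noncomputable def cdMu (G : Type*) [Group G] : ℕ :=
  sInf {n : ℕ | ∃ H : Subgroup G, cdMeasure H = n}

/-- A subgroup `H ≤ G` is a CD-subgroup if `m(G,H) = μ(G)`. -/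
def IsCDSubgroup {G : Type*} [Group G] (H : Subgroup G) : Prop :=
  cdMeasure H = cdMu G

section CDAux

open Subgroup

variable {G : Type*} [Group G] [Finite G]

/-- The classical Chermak–Delgado measure `|H| * |C_G(H)|`. -/
noncomputable def cdF (H : Subgroup G) : ℕ :=
  Nat.card H * Nat.card (centralizer (H : Set G))

lemma cdMeasure_mul_cdF (H : Subgroup G) :
    cdMeasure H * cdF H = Nat.card G * Nat.card G := by
  unfold cdMeasure cdF
  rw [show H.index * (centralizer (H : Set G)).index *
      (Nat.card H * Nat.card (centralizer (H : Set G))) =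
      (Nat.card H * H.index) *
      (Nat.card (centralizer (H : Set G)) * (centralizer (H : Set G)).index) by ring,
    card_mul_index, card_mul_index]

lemma cdMeasure_pos (H : Subgroup G) : 0 < cdMeasure H := by
  have h := cdMeasure_mul_cdF H
  have hn : 0 < Nat.card G * Nat.card G := Nat.mul_pos Nat.card_pos Nat.card_pos
  rcases Nat.eq_zero_or_pos (cdMeasure H) with h0 | h0
  · rw [h0, zero_mul] at h; omega
  · exact h0

lemma cdF_pos (H : Subgroup G) : 0 < cdF H := by
  have h := cdMeasure_mul_cdF H
  have hn : 0 < Nat.card G * Nat.card G := Nat.mul_pos Nat.card_pos Nat.card_pos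
  rcases Nat.eq_zero_or_pos (cdF H) with h0 | h0
  · rw [h0, mul_zero] at h; omega
  · exact h0

lemma cdMeasure_le_iff {H K : Subgroup G} :
    cdMeasure H ≤ cdMeasure K ↔ cdF K ≤ cdF H := by
  have hH := cdMeasure_mul_cdF H
  have hK := cdMeasure_mul_cdF K
  constructor
  · intro h
    have : cdMeasure H * cdF K ≤ cdMeasure H * cdF H := by
      rw [hH, ← hK]; exact Nat.mul_le_mul_right _ h
    exact Nat.le_of_mul_le_mul_left this (cdMeasure_pos H)
  · intro h
    have : cdMeasure H * cdF K ≤ cdMeasure K * cdF K := by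
      calc cdMeasure H * cdF K ≤ cdMeasure H * cdF H := Nat.mul_le_mul_left _ h
        _ = cdMeasure K * cdF K := by rw [hH, hK]
    exact Nat.le_of_mul_le_mul_right this (cdF_pos K)

lemma exists_cd : ∃ H : Subgroup G, IsCDSubgroup H := by
  have : cdMu G ∈ {n : ℕ | ∃ H : Subgroup G, cdMeasure H = n} :=
    Nat.sInf_mem ⟨cdMeasure (⊤ : Subgroup G), ⊤, rfl⟩
  obtain ⟨H, hH⟩ := this
  exact ⟨H, hH⟩

lemma cdMu_le (K : Subgroup G) : cdMu G ≤ cdMeasure K :=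
  Nat.sInf_le ⟨K, rfl⟩

lemma isCD_iff {H : Subgroup G} : IsCDSubgroup H ↔ ∀ K : Subgroup G, cdF K ≤ cdF H := by
  constructor
  · intro h K
    exact cdMeasure_le_iff.1 (h ▸ cdMu_le K)
  · intro h
    obtain ⟨H0, hH0⟩ := exists_cd (G := G)
    exact le_antisymm (hH0 ▸ cdMeasure_le_iff.2 (h H0)) (cdMu_le H)

lemma card_mul_relIndex {A B : Subgroup G} (h : A ≤ B) :
    Nat.card A * A.relIndex B = Nat.card B := by
  have := Subgroup.card_mul_index (A.subgroupOf B)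
  rwa [Nat.card_congr (subgroupOfEquivOfLe h).toEquiv] at this

lemma relIndex_ne_zero' (A B : Subgroup G) : A.relIndex B ≠ 0 :=
  Subgroup.index_ne_zero_of_finite

lemma card_mul_card_le (H K : Subgroup G) :
    Nat.card H * Nat.card K ≤ Nat.card ↥(H ⊔ K) * Nat.card ↥(H ⊓ K) := by
  have h1 : Nat.card ↥(H ⊓ K) * (H ⊓ K).relIndex H = Nat.card H :=
    card_mul_relIndex inf_le_left
  have h2 : Nat.card K * K.relIndex (H ⊔ K) = Nat.card ↥(H ⊔ K) :=
    card_mul_relIndex le_sup_right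
  have h3 : (H ⊓ K).relIndex H = K.relIndex H := inf_relIndex_left (H := H) (K := K)
  have h4 : K.relIndex H ≤ K.relIndex (H ⊔ K) :=
    relIndex_le_of_le_right le_sup_left (relIndex_ne_zero' K (H ⊔ K))
  calc Nat.card H * Nat.card K
      = Nat.card ↥(H ⊓ K) * K.relIndex H * Nat.card K := by rw [← h3, h1]
    _ ≤ Nat.card ↥(H ⊓ K) * K.relIndex (H ⊔ K) * Nat.card K := by
        exact Nat.mul_le_mul_right _ (Nat.mul_le_mul_left _ h4)
    _ = Nat.card ↥(H ⊔ K) * Nat.card ↥(H ⊓ K) := by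
        rw [← h2]; ring

lemma le_centralizer_centralizer' (H : Subgroup G) :
    H ≤ centralizer ((centralizer (H : Set G) : Subgroup G) : Set G) := by
  intro x hx
  rw [mem_centralizer_iff]
  intro h hh
  exact (mem_centralizer_iff.1 hh x hx).symm

lemma inf_centralizer_le (H K : Subgroup G) :
    centralizer (H : Set G) ⊓ centralizer (K : Set G) ≤
      centralizer ((H ⊔ K : Subgroup G) : Set G) := by
  rw [← Subgroup.le_centralizer_iff]
  exact sup_le (Subgroup.le_centralizer_iff.1 inf_le_left)
    (Subgroup.le_centralizer_iff.1 inf_le_right)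

lemma cdF_mul_cdF_le (H K : Subgroup G) :
    cdF H * cdF K ≤ cdF (H ⊔ K) * cdF (H ⊓ K) := by
  have h1 := card_mul_card_le H K
  have h2 := card_mul_card_le (centralizer (H : Set G)) (centralizer (K : Set G))
  have h3 : Nat.card ↥(centralizer (H : Set G) ⊔ centralizer (K : Set G)) ≤
      Nat.card ↥(centralizer ((H ⊓ K : Subgroup G) : Set G)) :=
    Subgroup.card_le_of_le (sup_le
      (centralizer_le (SetLike.coe_subset_coe.2 inf_le_left))
      (centralizer_le (SetLike.coe_subset_coe.2 inf_le_right)))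
  have h4 : Nat.card ↥(centralizer (H : Set G) ⊓ centralizer (K : Set G)) ≤
      Nat.card ↥(centralizer ((H ⊔ K : Subgroup G) : Set G)) :=
    Subgroup.card_le_of_le (inf_centralizer_le H K)
  have h5 := Nat.mul_le_mul h1 (le_trans h2 (Nat.mul_le_mul h3 h4))
  calc cdF H * cdF K
      = Nat.card H * Nat.card K *
        (Nat.card ↥(centralizer (H : Set G)) * Nat.card ↥(centralizer (K : Set G))) := by
        unfold cdF; ring
    _ ≤ Nat.card ↥(H ⊔ K) * Nat.card ↥(H ⊓ K) *
        (Nat.card ↥(centralizer ((H ⊓ K : Subgroup G) : Set G)) *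
         Nat.card ↥(centralizer ((H ⊔ K : Subgroup G) : Set G))) := h5
    _ = cdF (H ⊔ K) * cdF (H ⊓ K) := by unfold cdF; ring

lemma isCD_inf {H K : Subgroup G} (hH : IsCDSubgroup H) (hK : IsCDSubgroup K) :
    IsCDSubgroup (H ⊓ K) := by
  rw [isCD_iff] at hH hK ⊢
  have hHK : cdF K = cdF H := le_antisymm (hH K) (hK H)
  have h1 : cdF H * cdF K ≤ cdF H * cdF (H ⊓ K) := by
    calc cdF H * cdF K ≤ cdF (H ⊔ K) * cdF (H ⊓ K) := cdF_mul_cdF_le H K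
      _ ≤ cdF H * cdF (H ⊓ K) := Nat.mul_le_mul_right _ (hH (H ⊔ K))
  have h2 : cdF K ≤ cdF (H ⊓ K) := Nat.le_of_mul_le_mul_left h1 (cdF_pos H)
  intro L
  exact le_trans (hK L) h2

lemma isCD_centralizer {H : Subgroup G} (hH : IsCDSubgroup H) :
    IsCDSubgroup (centralizer (H : Set G)) := by
  rw [isCD_iff] at hH ⊢
  intro L
  refine le_trans (hH L) ?_
  unfold cdF
  rw [mul_comm]
  exact Nat.mul_le_mul_left _ (Subgroup.card_le_of_le (le_centralizer_centralizer' H))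

lemma centralizer_comap (φ : G ≃* G) (H : Subgroup G) :
    centralizer ((H.comap φ.toMonoidHom : Subgroup G) : Set G) =
      (centralizer (H : Set G)).comap φ.toMonoidHom := by
  ext x
  simp only [mem_comap, mem_centralizer_iff]
  constructor
  · intro hx g hg
    have h1 : φ.symm g ∈ H.comap φ.toMonoidHom := by
      simp only [mem_comap, MulEquiv.coe_toMonoidHom, MulEquiv.apply_symm_apply]; exact hg
    have h2 := hx (φ.symm g) h1
    have := congrArg φ h2
    simpa using this
  · intro hx h hh
    have h2 := hx (φ h) hh
    apply φ.injective
    simpa using h2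

lemma cdMeasure_comap (φ : G ≃* G) (H : Subgroup G) :
    cdMeasure (H.comap φ.toMonoidHom) = cdMeasure H := by
  unfold cdMeasure
  have hr : (φ.toMonoidHom : G →* G).range = ⊤ :=
    MonoidHom.range_eq_top.2 φ.surjective
  rw [centralizer_comap, index_comap, index_comap, hr, relIndex_top_right, relIndex_top_right]

lemma isCD_comap (φ : G ≃* G) {H : Subgroup G} (hH : IsCDSubgroup H) :
    IsCDSubgroup (H.comap φ.toMonoidHom) := by
  unfold IsCDSubgroup at hH ⊢
  rw [cdMeasure_comap]; exact hH

end CDAux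

theorem stmt_7 {G : Type*} [Group G] [Finite G] :
    ∃ A : Subgroup G, A.Characteristic ∧ IsMulCommutative A ∧ A.index ≤ cdMu G := by
  classical
  set S : Set (Subgroup G) := {H | IsCDSubgroup H} with hS
  have hSne : S.Nonempty := exists_cd
  obtain ⟨A, hA, hmin⟩ := Set.Finite.exists_minimalFor id S (Set.toFinite S) hSne
  have hle : ∀ H : Subgroup G, IsCDSubgroup H → A ≤ H := by
    intro H hH
    have hinf : A ⊓ H ∈ S := isCD_inf hA hH
    have := hmin (j := A ⊓ H) hinf inf_le_left
    simp only [id] at this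
    exact this.trans inf_le_right
  have hAC : A ≤ Subgroup.centralizer (A : Set G) :=
    hle _ (isCD_centralizer hA)
  refine ⟨A, ?_, Subgroup.le_centralizer_iff_isMulCommutative.1 hAC, ?_⟩
  · exact Subgroup.characteristic_iff_le_comap.2 fun φ => hle _ (isCD_comap φ hA)
  · have h1 : A.index ≤ A.index * (Subgroup.centralizer (A : Set G)).index :=
      Nat.le_mul_of_pos_right _ (Nat.pos_of_ne_zero Subgroup.index_ne_zero_of_finite)
    calc A.index ≤ cdMeasure A := h1
      _ = cdMu G := hA
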